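/- Let p be a prime, k ≥ 0 an integer, and r an integer with 0 ≤ r < p. Then F_p(kp + r) − F_p(kp) = C(r+1, 2) · (F_p(k+1) − F_p(k)). -/

import Mathlib

/-- `Fcount p n` = number of binomial coefficients `C(m,k)`, `0 ≤ k ≤ m < n`,
not divisible by `p`. -/
def Fcount (p n : ℕ) : ℕ :=
  ((Finset.range n ×ˢ Finset.range n).filter
    (fun mk => mk.2 ≤ mk.1 ∧ ¬ (p ∣ Nat.choose mk.1 mk.2))).card

/-- Number of `a ≤ m` with `p ∤ C(m,a)`. -/
def rowCount (p m : ℕ) : ℕ :=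
  ((Finset.range (m + 1)).filter (fun a => ¬ (p ∣ Nat.choose m a))).card

lemma Fcount_eq_sum (p n : ℕ) :
    Fcount p n = ∑ m ∈ Finset.range n, rowCount p m := by
  unfold Fcount rowCount
  rw [Finset.card_eq_sum_card_fiberwise (f := Prod.fst) (t := Finset.range n)
    (by intro x hx; simp only [Finset.mem_coe, Finset.mem_filter, Finset.mem_product] at hx; exact hx.1.1)]
  refine Finset.sum_congr rfl fun m hm => ?_
  rw [Finset.mem_range] at hm
  apply Finset.card_nbij' (i := Prod.snd) (j := fun a => (m, a))
  · intro x hx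
    simp only [Finset.mem_coe, Finset.mem_filter, Finset.mem_product, Finset.mem_range] at hx ⊢
    obtain ⟨⟨⟨_, _⟩, hle, hnd⟩, hfst⟩ := hx
    subst hfst
    exact ⟨Nat.lt_succ_of_le hle, hnd⟩
  · intro a ha
    simp only [Finset.mem_coe, Finset.mem_filter, Finset.mem_range, Nat.lt_succ_iff] at ha ⊢
    simp only [Finset.mem_coe, Finset.mem_product, Finset.mem_range]
    exact ⟨⟨⟨hm, lt_of_le_of_lt ha.1 hm⟩, ha.1, ha.2⟩, trivial⟩
  · intro x hx
    simp only [Finset.mem_coe, Finset.mem_filter] at hx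
    rw [← hx.2]
  · intro a _; rfl

lemma lucas_dvd (p : ℕ) (hp : p.Prime) (k j a : ℕ) (hj : j < p) :
    p ∣ Nat.choose (k * p + j) a ↔ (p ∣ Nat.choose k (a / p) ∨ p ∣ Nat.choose j (a % p)) := by
  haveI : Fact p.Prime := ⟨hp⟩
  have h := Choose.choose_modEq_choose_mod_mul_choose_div_nat
    (p := p) (n := k * p + j) (k := a)
  have h1 : (k * p + j) % p = j := by
    rw [mul_comm, Nat.mul_add_mod, Nat.mod_eq_of_lt hj]
  have h2 : (k * p + j) / p = k := by
    rw [mul_comm, Nat.mul_add_div hp.pos, Nat.div_eq_of_lt hj, add_zero]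
  rw [h1, h2] at h
  unfold Nat.ModEq at h
  constructor
  · intro hd
    have : p ∣ Nat.choose j (a % p) * Nat.choose k (a / p) := by
      rw [Nat.dvd_iff_mod_eq_zero, ← h, ← Nat.dvd_iff_mod_eq_zero]; exact hd
    rcases (Nat.Prime.dvd_mul hp).mp this with h' | h'
    · exact Or.inr h'
    · exact Or.inl h'
  · intro hd
    rw [Nat.dvd_iff_mod_eq_zero, h, ← Nat.dvd_iff_mod_eq_zero]
    rcases hd with h' | h'
    · exact Dvd.dvd.mul_left h' _
    · exact Dvd.dvd.mul_right h' _

/-- For `j < p`, `p ∤ C(j,c)` iff `c ≤ j`. -/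
lemma not_dvd_choose_small (p : ℕ) (hp : p.Prime) {j c : ℕ} (hj : j < p) :
    ¬ p ∣ Nat.choose j c ↔ c ≤ j := by
  constructor
  · intro h
    by_contra hc
    exact h (by rw [Nat.choose_eq_zero_of_lt (by omega)]; exact dvd_zero p)
  · intro hc hd
    have : p ∣ Nat.factorial j :=
      (Nat.choose_mul_factorial_mul_factorial hc) ▸ (hd.mul_right _).mul_right _
    exact absurd ((Nat.Prime.dvd_factorial hp).mp this) (by omega)

lemma rowCount_row (p : ℕ) (hp : p.Prime) (k j : ℕ) (hj : j < p) :
    rowCount p (k * p + j) = (j + 1) * rowCount p k := by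
  unfold rowCount
  rw [← Finset.card_range (j + 1), ← Finset.card_product]
  apply Finset.card_nbij' (i := fun a => (a % p, a / p)) (j := fun x => x.2 * p + x.1)
  · intro a ha
    simp only [Finset.mem_coe, Finset.mem_filter, Finset.mem_range, Finset.mem_product, Nat.lt_succ_iff] at ha ⊢
    obtain ⟨-, hnd⟩ := ha
    rw [lucas_dvd p hp k j a hj, not_or] at hnd
    obtain ⟨h1, h2⟩ := hnd
    have hb : a / p ≤ k := by
      by_contra hb
      exact h1 (by rw [Nat.choose_eq_zero_of_lt (by omega)]; exact dvd_zero p)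
    exact ⟨(not_dvd_choose_small p hp hj).mp h2, hb, h1⟩
  · intro x hx
    simp only [Finset.mem_coe, Finset.mem_filter, Finset.mem_range, Finset.mem_product, Nat.lt_succ_iff] at hx ⊢
    obtain ⟨hc, hb, hnd⟩ := hx
    have hcp : x.1 < p := by omega
    have hmod : (x.2 * p + x.1) % p = x.1 := by
      rw [mul_comm, Nat.mul_add_mod, Nat.mod_eq_of_lt hcp]
    have hdiv : (x.2 * p + x.1) / p = x.2 := by
      rw [mul_comm, Nat.mul_add_div hp.pos, Nat.div_eq_of_lt hcp, add_zero]
    have hle : x.2 * p + x.1 ≤ k * p + j := by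
      have := Nat.mul_le_mul_right p hb; omega
    refine ⟨hle, ?_⟩
    rw [lucas_dvd p hp k j _ hj, hmod, hdiv, not_or]
    exact ⟨hnd, (not_dvd_choose_small p hp hj).mpr hc⟩
  · intro a _
    simpa [mul_comm] using Nat.div_add_mod a p
  · intro x hx
    simp only [Finset.mem_coe, Finset.mem_product, Finset.mem_range, Finset.mem_filter, Nat.lt_succ_iff] at hx
    have hcp : x.1 < p := by omega
    have hmod : (x.2 * p + x.1) % p = x.1 := by
      rw [mul_comm, Nat.mul_add_mod, Nat.mod_eq_of_lt hcp]
    have hdiv : (x.2 * p + x.1) / p = x.2 := by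
      rw [mul_comm, Nat.mul_add_div hp.pos, Nat.div_eq_of_lt hcp, add_zero]
    exact Prod.ext hmod hdiv

lemma sum_range_succ_choose (r : ℕ) :
    ∑ j ∈ Finset.range r, (j + 1) = Nat.choose (r + 1) 2 := by
  induction r with
  | zero => simp
  | succ n ih =>
    rw [Finset.sum_range_succ, ih, Nat.choose_succ_succ (n + 1) 1, Nat.choose_one_right]
    norm_num
    omega

/-- For a prime `p`, `k ≥ 0` and `0 ≤ r < p`:
`F_p(kp + r) − F_p(kp) = C(r+1,2) · (F_p(k+1) − F_p(k))`. -/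
theorem Fcount_diff (p : ℕ) (hp : p.Prime) (k r : ℕ) (hr : r < p) :
    (Fcount p (k * p + r) : ℤ) - (Fcount p (k * p) : ℤ) =
      (Nat.choose (r + 1) 2 : ℤ) * ((Fcount p (k + 1) : ℤ) - (Fcount p k : ℤ)) := by
  have h1 : Fcount p (k * p + r) = Fcount p (k * p) + Nat.choose (r + 1) 2 * rowCount p k := by
    rw [Fcount_eq_sum, Fcount_eq_sum, Finset.sum_range_add]
    congr 1
    calc ∑ j ∈ Finset.range r, rowCount p (k * p + j)
        = ∑ j ∈ Finset.range r, (j + 1) * rowCount p k := by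
          refine Finset.sum_congr rfl fun j hj => ?_
          rw [Finset.mem_range] at hj
          exact rowCount_row p hp k j (by omega)
      _ = (∑ j ∈ Finset.range r, (j + 1)) * rowCount p k := by rw [Finset.sum_mul]
      _ = Nat.choose (r + 1) 2 * rowCount p k := by rw [sum_range_succ_choose]
  have h2 : Fcount p (k + 1) = Fcount p k + rowCount p k := by
    rw [Fcount_eq_sum, Fcount_eq_sum, Finset.sum_range_succ]
  rw [h1, h2]
  push_cast
  ring
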